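/- For any commutative ring A, the assignment a + M ↦ class of (⟨1⟩, ā) defines a group isomorphism from A/M onto the quotient of G_A × A_{A^×} by the subgroup generated by the pairs (⟨b⟩, class of 3(b−1)), b ∈ A^×; its inverse is induced by (⟨b⟩, ā) ↦ class of a − 3b + 3 in A/M. -/

import Mathlib

variable (A : Type*) [CommRing A]

/-- `G_A := A^×/(A^×)²`. -/
def GA : Type _ := Aˣ ⧸ (powMonoidHom 2 : Aˣ →* Aˣ).range

instance : CommGroup (GA A) := by unfold GA; infer_instance

/-- The class `⟨a⟩ ∈ G_A` of a unit `a`. -/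
def cls (a : Aˣ) : GA A := QuotientGroup.mk a

/-- `M`: the additive subgroup of `A` generated by the elements `x(a²−1)` and
`3(b+1)(c+1)`, for `x ∈ A` and units `a, b, c`. -/
def Msub : AddSubgroup A :=
  AddSubgroup.closure
    ({z : A | ∃ (x : A) (a : Aˣ), z = x * ((a : A) ^ 2 - 1)} ∪
     {z : A | ∃ b c : Aˣ, z = 3 * ((b : A) + 1) * ((c : A) + 1)})

/-- The additive subgroup of `A` generated by the elements `x(a²−1)`, `x ∈ A`, `a ∈ A^×`. -/
def Asub : AddSubgroup A :=
  AddSubgroup.closure {z : A | ∃ (x : A) (a : Aˣ), z = x * ((a : A) ^ 2 - 1)}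

/-- `A_{A^×} := A/⟨x(a²−1)⟩`. -/
def AmodUnits : Type _ := A ⧸ Asub A

instance : AddCommGroup (AmodUnits A) := by unfold AmodUnits; infer_instance

/-- The subgroup of `G_A × A_{A^×}` generated by the pairs `(⟨b⟩, 3(b−1))`, `b ∈ A^×`. -/
def relSub : AddSubgroup (Additive (GA A) × AmodUnits A) :=
  AddSubgroup.closure
    {p | ∃ b : Aˣ, p = (Additive.ofMul (cls A b),
      (QuotientAddGroup.mk (3 * ((b : A) - 1)) : A ⧸ Asub A))}

/- ===== auxiliary lemmas ===== -/

lemma asub_le_msub : Asub A ≤ Msub A :=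
  AddSubgroup.closure_mono Set.subset_union_left

lemma mem_asub (x : A) (a : Aˣ) : x * ((a : A) ^ 2 - 1) ∈ Asub A :=
  AddSubgroup.subset_closure ⟨x, a, rfl⟩

lemma mem_msub2 (b c : Aˣ) : 3 * ((b : A) + 1) * ((c : A) + 1) ∈ Msub A :=
  AddSubgroup.subset_closure (Or.inr ⟨b, c, rfl⟩)

lemma gen_mem (b : Aˣ) :
    ((Additive.ofMul (cls A b),
      (QuotientAddGroup.mk (3 * ((b : A) - 1)) : A ⧸ Asub A)) :
      Additive (GA A) × AmodUnits A) ∈ relSub A :=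
  AddSubgroup.subset_closure ⟨b, rfl⟩

lemma cls_mul (b c : Aˣ) : cls A (b * c) = cls A b * cls A c := rfl
lemma cls_one : cls A 1 = 1 := rfl

lemma key_mem (b c : Aˣ) :
    (((0 : Additive (GA A)),
      (QuotientAddGroup.mk (3 * ((b : A) + 1) * ((c : A) + 1)) : A ⧸ Asub A)) :
      Additive (GA A) × AmodUnits A) ∈ relSub A := by
  have h : (Additive.ofMul (cls A b), (QuotientAddGroup.mk (3 * ((b : A) - 1)) : A ⧸ Asub A))
      + (Additive.ofMul (cls A c), (QuotientAddGroup.mk (3 * ((c : A) - 1)) : A ⧸ Asub A))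
      + (Additive.ofMul (cls A ((b * c)⁻¹)),
          (QuotientAddGroup.mk (3 * (((b * c)⁻¹ : Aˣ) - 1)) : A ⧸ Asub A))
      - (Additive.ofMul (cls A (-1)), (QuotientAddGroup.mk (3 * (((-1 : Aˣ) : A) - 1)) : A ⧸ Asub A))
      - (Additive.ofMul (cls A (-1)), (QuotientAddGroup.mk (3 * (((-1 : Aˣ) : A) - 1)) : A ⧸ Asub A))
      ∈ relSub A :=
    sub_mem (sub_mem (add_mem (add_mem (gen_mem A b) (gen_mem A c))
      (gen_mem A ((b * c)⁻¹))) (gen_mem A (-1))) (gen_mem A (-1))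
  have e : (((0 : Additive (GA A)),
      (QuotientAddGroup.mk (3 * ((b : A) + 1) * ((c : A) + 1)) : A ⧸ Asub A)) :
      Additive (GA A) × AmodUnits A)
      = (Additive.ofMul (cls A b), (QuotientAddGroup.mk (3 * ((b : A) - 1)) : A ⧸ Asub A))
      + (Additive.ofMul (cls A c), (QuotientAddGroup.mk (3 * ((c : A) - 1)) : A ⧸ Asub A))
      + (Additive.ofMul (cls A ((b * c)⁻¹)),
          (QuotientAddGroup.mk (3 * (((b * c)⁻¹ : Aˣ) - 1)) : A ⧸ Asub A))
      - (Additive.ofMul (cls A (-1)), (QuotientAddGroup.mk (3 * (((-1 : Aˣ) : A) - 1)) : A ⧸ Asub A))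
      - (Additive.ofMul (cls A (-1)), (QuotientAddGroup.mk (3 * (((-1 : Aˣ) : A) - 1)) : A ⧸ Asub A)) := by
    have hu : b * c * (b * c)⁻¹ / (-1) / (-1) = (1 : Aˣ) := by
      rw [mul_inv_cancel]
      simp
    refine Prod.ext ?_ ?_
    · show (0 : Additive (GA A)) = Additive.ofMul (cls A (b * c * (b * c)⁻¹ / (-1) / (-1)))
      rw [hu, cls_one]
      rfl
    · show (QuotientAddGroup.mk _ : A ⧸ Asub A) =
        QuotientAddGroup.mk _ + QuotientAddGroup.mk _ + QuotientAddGroup.mk _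
          - QuotientAddGroup.mk _ - QuotientAddGroup.mk _
      rw [← QuotientAddGroup.mk_add, ← QuotientAddGroup.mk_add, ← QuotientAddGroup.mk_sub,
        ← QuotientAddGroup.mk_sub, QuotientAddGroup.eq]
      have h1 : ((b * c : Aˣ) : A) * (((b * c)⁻¹ : Aˣ) : A) = 1 := Units.mul_inv _
      have := mem_asub A (3 * ((b * c : Aˣ) : A)) ((b * c)⁻¹)
      have he : -(3 * ((b : A) + 1) * ((c : A) + 1)) +
          (3 * ((b : A) - 1) + 3 * ((c : A) - 1) + 3 * ((((b * c)⁻¹ : Aˣ) : A) - 1)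
            - 3 * (((-1 : Aˣ) : A) - 1) - 3 * (((-1 : Aˣ) : A) - 1))
          = 3 * ((b * c : Aˣ) : A) * (((((b * c)⁻¹ : Aˣ) : A)) ^ 2 - 1) := by
        have h1' : (b : A) * (c : A) * (((b * c)⁻¹ : Aˣ) : A) = 1 := by
          rw [← Units.val_mul]; exact Units.mul_inv _
        push_cast [Units.val_mul]
        linear_combination (-3 * (((b * c)⁻¹ : Aˣ) : A)) * h1'
      rw [he]
      exact this
  rw [e]
  exact h

/- forward map -/

def fwd : A →+ (Additive (GA A) × AmodUnits A) ⧸ relSub A :=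
  (QuotientAddGroup.mk' (relSub A)).comp
    (AddMonoidHom.prod 0 (QuotientAddGroup.mk' (Asub A)))

lemma fwd_apply (a : A) :
    fwd A a = QuotientAddGroup.mk ((0 : Additive (GA A)),
      (QuotientAddGroup.mk a : A ⧸ Asub A)) := rfl

lemma msub_le_ker : Msub A ≤ (fwd A).ker := by
  rw [Msub, AddSubgroup.closure_le]
  rintro z (⟨x, a, rfl⟩ | ⟨b, c, rfl⟩)
  · show fwd A _ = 0
    rw [fwd_apply]
    have : (QuotientAddGroup.mk (x * ((a : A) ^ 2 - 1)) : A ⧸ Asub A) = 0 :=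
      (QuotientAddGroup.eq_zero_iff _).mpr (mem_asub A x a)
    rw [this]
    rfl
  · show fwd A _ = 0
    rw [fwd_apply]
    exact (QuotientAddGroup.eq_zero_iff (N := relSub A) _).mpr (key_mem A b c)

/- backward map -/

def phi : Aˣ →* Multiplicative (A ⧸ Msub A) :=
  MonoidHom.mk' (fun b => Multiplicative.ofAdd
      (QuotientAddGroup.mk (3 - 3 * (b : A)))) (by
    intro b c
    have : (QuotientAddGroup.mk (3 - 3 * ((b * c : Aˣ) : A)) : A ⧸ Msub A) =
        QuotientAddGroup.mk (3 - 3 * (b : A)) + QuotientAddGroup.mk (3 - 3 * (c : A)) := by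
      rw [← QuotientAddGroup.mk_add, QuotientAddGroup.eq]
      have := mem_msub2 A (-b) (-c)
      have he : -(3 - 3 * ((b * c : Aˣ) : A)) + (3 - 3 * (b : A) + (3 - 3 * (c : A)))
          = 3 * (((-b : Aˣ) : A) + 1) * (((-c : Aˣ) : A) + 1) := by
        push_cast [Units.val_mul, Units.val_neg]
        ring
      rw [he]
      exact this
    exact congrArg Multiplicative.ofAdd this)

lemma pow_le_ker_phi : (powMonoidHom 2 : Aˣ →* Aˣ).range ≤ (phi A).ker := by
  rintro _ ⟨u, rfl⟩
  show Multiplicative.ofAdd (QuotientAddGroup.mk (3 - 3 * ((u ^ 2 : Aˣ) : A)) : A ⧸ Msub A) = 1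
  have : (QuotientAddGroup.mk (3 - 3 * ((u ^ 2 : Aˣ) : A)) : A ⧸ Msub A) = 0 := by
    refine (QuotientAddGroup.eq_zero_iff _).mpr (asub_le_msub A ?_)
    have he : 3 - 3 * ((u ^ 2 : Aˣ) : A) = (-3) * ((u : A) ^ 2 - 1) := by
      push_cast
      ring
    rw [he]
    exact mem_asub A (-3) u
  rw [this]
  rfl

def phi' : Additive (GA A) →+ A ⧸ Msub A :=
  MonoidHom.toAdditiveLeft (QuotientGroup.lift _ (phi A) (pow_le_ker_phi A))

def psi : AmodUnits A →+ A ⧸ Msub A :=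
  QuotientAddGroup.map (Asub A) (Msub A) (AddMonoidHom.id A) (asub_le_msub A)

def bwd0 : Additive (GA A) × AmodUnits A →+ A ⧸ Msub A :=
  (phi' A).coprod (psi A)

lemma bwd0_apply (b : Aˣ) (a : A) :
    bwd0 A (Additive.ofMul (cls A b), (QuotientAddGroup.mk a : A ⧸ Asub A)) =
      QuotientAddGroup.mk (3 - 3 * (b : A) + a) := rfl

lemma rel_le_ker : relSub A ≤ (bwd0 A).ker := by
  rw [relSub, AddSubgroup.closure_le]
  rintro _ ⟨b, rfl⟩
  show bwd0 A _ = 0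
  refine (bwd0_apply A b _).trans ?_
  rw [show (3 : A) - 3 * (b : A) + 3 * ((b : A) - 1) = 0 by ring]
  rfl

def F : A ⧸ Msub A →+ (Additive (GA A) × AmodUnits A) ⧸ relSub A :=
  QuotientAddGroup.lift (Msub A) (fwd A) (msub_le_ker A)

def G : (Additive (GA A) × AmodUnits A) ⧸ relSub A →+ A ⧸ Msub A :=
  QuotientAddGroup.lift (relSub A) (bwd0 A) (rel_le_ker A)

lemma GF : (G A).comp (F A) = AddMonoidHom.id _ := by
  refine QuotientAddGroup.addMonoidHom_ext _ (AddMonoidHom.ext fun a => ?_)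
  show G A (F A (QuotientAddGroup.mk a)) = QuotientAddGroup.mk a
  have : F A (QuotientAddGroup.mk a) = QuotientAddGroup.mk
      ((Additive.ofMul (cls A 1), (QuotientAddGroup.mk a : A ⧸ Asub A)) :
        Additive (GA A) × AmodUnits A) := rfl
  rw [this]
  show bwd0 A _ = _
  rw [bwd0_apply]
  norm_num

lemma FG : (F A).comp (G A) = AddMonoidHom.id _ := by
  refine QuotientAddGroup.addMonoidHom_ext _ (AddMonoidHom.ext fun p => ?_)
  obtain ⟨x, y⟩ := p
  obtain ⟨b, hb⟩ := QuotientGroup.mk_surjective (Additive.toMul x)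
  obtain ⟨a, rfl⟩ := QuotientAddGroup.mk_surjective y
  have hx : x = Additive.ofMul (cls A b) := by
    rw [cls, hb]; rfl
  subst hx
  show F A (G A (QuotientAddGroup.mk
      ((Additive.ofMul (cls A b), (QuotientAddGroup.mk a : A ⧸ Asub A)) :
        Additive (GA A) × AmodUnits A))) = QuotientAddGroup.mk
      ((Additive.ofMul (cls A b), (QuotientAddGroup.mk a : A ⧸ Asub A)) :
        Additive (GA A) × AmodUnits A)
  have h1 : G A (QuotientAddGroup.mk
      ((Additive.ofMul (cls A b), (QuotientAddGroup.mk a : A ⧸ Asub A)) :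
        Additive (GA A) × AmodUnits A)) = QuotientAddGroup.mk (3 - 3 * (b : A) + a) :=
    bwd0_apply A b a
  rw [h1]
  show fwd A (3 - 3 * (b : A) + a) = _
  rw [fwd_apply]
  refine (QuotientAddGroup.eq (s := relSub A)).mpr ?_
  have e : -(((0 : Additive (GA A)),
        (QuotientAddGroup.mk (3 - 3 * (b : A) + a) : A ⧸ Asub A)) :
        Additive (GA A) × AmodUnits A) +
      ((Additive.ofMul (cls A b), (QuotientAddGroup.mk a : A ⧸ Asub A)) :
        Additive (GA A) × AmodUnits A) =
      ((Additive.ofMul (cls A b), (QuotientAddGroup.mk (3 * ((b : A) - 1)) : A ⧸ Asub A)) :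
        Additive (GA A) × AmodUnits A) := by
    refine Prod.ext ?_ ?_
    · show -(0 : Additive (GA A)) + Additive.ofMul (cls A b) = Additive.ofMul (cls A b)
      rw [neg_zero, zero_add]
    · show -(QuotientAddGroup.mk _ : A ⧸ Asub A) + QuotientAddGroup.mk _ = QuotientAddGroup.mk _
      have h2 : (QuotientAddGroup.mk (-(3 - 3 * (b : A) + a) + a) : A ⧸ Asub A) =
          QuotientAddGroup.mk (3 * ((b : A) - 1)) := by
        congr 1
        ring
      exact h2
  convert gen_mem A b using 1
  exact e

/-- `a + M ↦ (⟨1⟩, ā)` defines an isomorphism from `A/M` onto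
`(G_A × A_{A^×})/⟨(⟨b⟩, 3(b−1))⟩`, with inverse induced by `(⟨b⟩, ā) ↦ a − 3b + 3`. -/
theorem amodM_iso_GA_times_AmodUnits :
    ∃ e : (A ⧸ Msub A) ≃+ (Additive (GA A) × AmodUnits A) ⧸ relSub A,
      (∀ a : A, e (QuotientAddGroup.mk a) =
        QuotientAddGroup.mk (Additive.ofMul (cls A 1),
          (QuotientAddGroup.mk a : A ⧸ Asub A))) ∧
      (∀ (b : Aˣ) (a : A), e.symm (QuotientAddGroup.mk (Additive.ofMul (cls A b),
          (QuotientAddGroup.mk a : A ⧸ Asub A))) =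
        QuotientAddGroup.mk (a - 3 * (b : A) + 3)) := by
  refine ⟨AddMonoidHom.toAddEquiv (F A) (G A) (GF A) (FG A), fun a => ?_, fun b a => ?_⟩
  · show F A (QuotientAddGroup.mk a) = _
    rfl
  · show G A (QuotientAddGroup.mk
        ((Additive.ofMul (cls A b), (QuotientAddGroup.mk a : A ⧸ Asub A)) :
          Additive (GA A) × AmodUnits A)) = QuotientAddGroup.mk (a - 3 * (b : A) + 3)
    rw [show a - 3 * (b : A) + 3 = 3 - 3 * (b : A) + a from by ring]
    exact bwd0_apply A b a
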